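/- With Γ₀ and the map Θ on vertices as defined, Θ gives a well-defined map from {(i,p,q,r,t) : i ∈ [0,n−1], p,q ∈ ℤ, r,t ∈ [−n+1,m], p·(m+n)+r ≤ q·(m+n)+t} to the set C of quadruples (k,u,l,v) with k ∈ ℤ, l ∈ ℕ, u,v ∈ [−m,n−1] and (v = s^l(u) or v < s^l(u) ≤ 0); i.e., in each of the five cases of the definition of Θ, the output quadruple satisfies the defining conditions of C (in particular the produced l is a nonnegative integer and the constraint between v and s^l(u) holds). -/

import Mathlib

/-- The starting-vertex map `s` of the algebra `Λ(n,m)`. -/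
def sMap (n u : ℤ) : ℤ :=
  if n = 1 then 0
  else if u = n - 1 then 0
  else if u < 0 then 1
  else u + 1

/-- The object assignment `Θ(i, p(m+n)+r+i, q(m+n)+t+i-δ_{i,0}m)`, defined case
by case in terms of the parameters `(i,p,q,r,t)`, output `(k,u,l,v)`. -/
def Theta (n m i p q r t : ℤ) : ℤ × ℤ × ℤ × ℤ :=
  if r ≤ 0 ∧ t ≤ -1 then
    (-q * n - t - i, -t, (q - p) * n + (t - r), -r)
  else if r ≤ 0 ∧ 0 ≤ t ∧ 0 < (q - p) * n - r then
    (-q * n - i, -m + t, (q - p) * n - r, -r)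
  else if r ≤ 0 ∧ 0 ≤ t then
    (-q * n - i, -m + t, 0, -m + t)
  else if t ≤ -1 then
    (-q * n - t - i, -t, (q - p) * n + t, -m - 1 + r)
  else
    (-q * n - i, -m + t, (q - p) * n, -m - 1 + r)

/-- The set `C` of quadruples `(k,u,l,v)` with `k ∈ ℤ`, `l ∈ ℕ`,
`u, v ∈ [-m, n-1]`, and either `v = s^l(u)` or `v < s^l(u) ≤ 0`. -/
def Cset (n m : ℤ) : Set (ℤ × ℤ × ℤ × ℤ) :=
  {w | 0 ≤ w.2.2.1 ∧
    (-m ≤ w.2.1 ∧ w.2.1 ≤ n - 1) ∧ (-m ≤ w.2.2.2 ∧ w.2.2.2 ≤ n - 1) ∧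
    (w.2.2.2 = (sMap n)^[w.2.2.1.toNat] w.2.1 ∨
      (w.2.2.2 < (sMap n)^[w.2.2.1.toNat] w.2.1 ∧
        (sMap n)^[w.2.2.1.toNat] w.2.1 ≤ 0))}

/-- The domain of `Θ`: tuples `(i,p,q,r,t)` with `i ∈ [0,n-1]`,
`r, t ∈ [-n+1, m]` and `p(m+n)+r ≤ q(m+n)+t`. -/
def ThetaDom (n m : ℤ) : Set (ℤ × ℤ × ℤ × ℤ × ℤ) :=
  {x | (0 ≤ x.1 ∧ x.1 ≤ n - 1) ∧
    (-n + 1 ≤ x.2.2.2.1 ∧ x.2.2.2.1 ≤ m) ∧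
    (-n + 1 ≤ x.2.2.2.2 ∧ x.2.2.2.2 ≤ m) ∧
    x.2.1 * (m + n) + x.2.2.2.1 ≤ x.2.2.1 * (m + n) + x.2.2.2.2}

lemma iterA_nat (n : ℤ) (hn : 1 ≤ n) :
    ∀ (l : ℕ) (u : ℤ), 0 ≤ u → u ≤ n - 1 → (sMap n)^[l] u = (u + l) % n := by
  intro l
  induction l with
  | zero =>
    intro u h0 h1
    simpa using (Int.emod_eq_of_lt h0 (by omega)).symm
  | succ l ih =>
    intro u h0 h1
    rw [Function.iterate_succ_apply]
    by_cases c1 : n = 1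
    · have hu : u = 0 := by omega
      have hs : sMap n u = 0 := by unfold sMap; simp [c1]
      rw [hs, ih 0 le_rfl (by omega)]
      subst c1; subst hu
      simp [Int.emod_one]
    · by_cases c2 : u = n - 1
      · have hs : sMap n u = 0 := by unfold sMap; simp [c1, c2]
        rw [hs, ih 0 le_rfl (by omega)]
        subst c2
        rw [show ((n - 1 : ℤ) + (↑(l+1) : ℤ)) = ↑l + n * 1 by push_cast; ring,
          Int.add_mul_emod_self_left]
        simp
      · have hs : sMap n u = u + 1 := by
          unfold sMap; simp only [c1, c2, if_false]
          rw [if_neg (by omega)]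
        rw [hs, ih (u+1) (by omega) (by omega)]
        congr 1
        push_cast; ring

lemma iterA (n : ℤ) (hn : 1 ≤ n) (l : ℤ) (hl : 0 ≤ l) (u : ℤ)
    (h0 : 0 ≤ u) (h1 : u ≤ n - 1) : (sMap n)^[l.toNat] u = (u + l) % n := by
  have := iterA_nat n hn l.toNat u h0 h1
  rwa [Int.toNat_of_nonneg hl] at this

lemma iterB (n : ℤ) (hn : 1 ≤ n) (l : ℤ) (hl : 1 ≤ l) (u : ℤ)
    (hu : u ≤ 0) : (sMap n)^[l.toNat] u = l % n := by
  have h : l.toNat = (l-1).toNat + 1 := by omega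
  rw [h, Function.iterate_succ_apply]
  by_cases c : n = 1
  · have hs : sMap n u = 0 := by unfold sMap; simp [c]
    rw [hs, iterA_nat n hn _ 0 le_rfl (by omega)]
    subst c; simp [Int.emod_one]
  · have hs : sMap n u = 1 := by
      unfold sMap; simp only [c, if_false]
      rcases lt_or_eq_of_le hu with h' | h'
      · rw [if_neg (by omega), if_pos h']
      · rw [if_neg (by omega), if_neg (by omega)]; omega
    rw [hs, iterA_nat n hn _ 1 (by omega) (by omega)]
    rw [Int.toNat_of_nonneg (by omega)]
    congr 1; ring


/-- In each case of its definition, `Θ` produces a quadruple `(k,u,l,v)`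
belonging to `C`: `l` is nonnegative, `u, v ∈ [-m, n-1]`, and the constraint
between `v` and `s^l(u)` holds. -/
theorem stmt17 (n m : ℤ) (hn : 1 ≤ n) (hm : 0 ≤ m)
    (i p q r t : ℤ)
    (hi : 0 ≤ i ∧ i ≤ n - 1)
    (hr : -n + 1 ≤ r ∧ r ≤ m) (ht : -n + 1 ≤ t ∧ t ≤ m)
    (hle : p * (m + n) + r ≤ q * (m + n) + t) :
    Theta n m i p q r t ∈ Cset n m := by
  obtain ⟨hr1, hr2⟩ := hr
  obtain ⟨ht1, ht2⟩ := ht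
  unfold Theta
  simp only [Cset, Set.mem_setOf_eq]
  split_ifs with h1 h2 h3 h4
  all_goals dsimp only
  -- Case 1 : r ≤ 0, t ≤ -1
  · obtain ⟨hra, hta⟩ := h1
    have hl : 0 ≤ (q - p) * n + (t - r) := by
      rcases le_or_gt (q - p) 0 with hd | hd
      · nlinarith [mul_nonpos_of_nonpos_of_nonneg hd hm]
      · nlinarith [le_mul_of_one_le_left (by omega : (0:ℤ) ≤ n) (by omega : (1:ℤ) ≤ q - p)]
    refine ⟨hl, ⟨by omega, by omega⟩, ⟨by omega, by omega⟩, Or.inl ?_⟩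
    show -r = (sMap n)^[((q - p) * n + (t - r)).toNat] (-t)
    rw [iterA n hn _ hl (-t) (by omega) (by omega),
      show (-t + ((q - p) * n + (t - r))) = -r + n * (q - p) by ring,
      Int.add_mul_emod_self_left]
    exact (Int.emod_eq_of_lt (by omega) (by omega)).symm
  -- Case 2
  · obtain ⟨hra, hta, hpos⟩ := h2
    refine ⟨by omega, ⟨by omega, by omega⟩, ⟨by omega, by omega⟩, Or.inl ?_⟩
    show -r = (sMap n)^[((q - p) * n - r).toNat] (-m + t)
    rw [iterB n hn _ (by omega) (-m + t) (by omega),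
      show ((q - p) * n - r) = -r + n * (q - p) by ring,
      Int.add_mul_emod_self_left]
    exact (Int.emod_eq_of_lt (by omega) (by omega)).symm
  -- Case 3
  · refine ⟨le_rfl, ⟨by omega, by omega⟩, ⟨by omega, by omega⟩, Or.inl ?_⟩
    simp
  -- Case 4 : r ≥ 1, t ≤ -1
  · have hra : 1 ≤ r := by omega
    have hd : 1 ≤ q - p := by
      by_contra h
      push_neg at h
      nlinarith [mul_nonpos_of_nonpos_of_nonneg (by omega : q - p ≤ 0) (by omega : (0:ℤ) ≤ m + n)]
    have hl : 1 ≤ (q - p) * n + t := by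
      nlinarith [le_mul_of_one_le_left (by omega : (0:ℤ) ≤ n) hd]
    refine ⟨by omega, ⟨by omega, by omega⟩, ⟨by omega, by omega⟩, Or.inr ⟨?_, ?_⟩⟩ <;>
    · show _
      rw [iterA n hn _ (by omega) (-t) (by omega) (by omega),
        show (-t + ((q - p) * n + t)) = 0 + n * (q - p) by ring,
        Int.add_mul_emod_self_left, Int.zero_emod]
      try omega
  -- Case 5 : r ≥ 1, t ≥ 0
  · have hra : 1 ≤ r := by omega
    have hta : 0 ≤ t := by omega
    have hd : 0 ≤ q - p := by
      by_contra h
      push_neg at h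
      nlinarith [mul_le_mul_of_nonneg_right (by omega : q - p ≤ -1) (by omega : (0:ℤ) ≤ m + n)]
    rcases eq_or_lt_of_le hd with hd0 | hd1
    · have hqp : q = p := by omega
      have hrt : r ≤ t := by
        subst hqp; omega
      have hl0 : (q - p) * n = 0 := by rw [← hd0]; ring
      refine ⟨by omega, ⟨by omega, by omega⟩, ⟨by omega, by omega⟩, Or.inr ⟨?_, ?_⟩⟩ <;>
      · show _
        rw [hl0]
        simp
        omega
    · have hd' : 1 ≤ q - p := by omega
      have hl : 1 ≤ (q - p) * n :=
        by nlinarith [mul_nonneg (by omega : (0:ℤ) ≤ q - p - 1) (by omega : (0:ℤ) ≤ n - 1)]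
      refine ⟨by omega, ⟨by omega, by omega⟩, ⟨by omega, by omega⟩, Or.inr ⟨?_, ?_⟩⟩ <;>
      · show _
        rw [iterB n hn _ hl (-m + t) (by omega),
          show ((q - p) * n) = 0 + n * (q - p) by ring,
          Int.add_mul_emod_self_left, Int.zero_emod]
        try omega
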